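/- Let w = u^p where u is a primitive word over the ordered alphabet A and p ≥ 1, and let π be a permutation of A. Then w is π-clustering for A if and only if u is π-clustering for A. -/

import Mathlib

/-- `wordPow u p` is the `p`-fold concatenation `u^p`. -/
def wordPow {A : Type*} (u : List A) : ℕ → List A
  | 0 => []
  | n + 1 => u ++ wordPow u n

/-- A word is primitive if it is not a proper integer power of another word. -/
def Primitive {A : Type*} (w : List A) : Prop :=
  ∀ (v : List A) (m : ℕ), w = wordPow v m → m = 1

/-- The Burrows–Wheeler transform of a word: the last letters of its cyclic rotations
listed in non-decreasing lexicographic order. -/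
def bwt {A : Type*} [LinearOrder A] (w : List A) : List A :=
  (Multiset.sort
    (((List.range w.length).map (fun i => w.rotate i) : List (List A)) : Multiset (List A)) (· ≤ ·)).filterMap
    List.getLast?

/-- `w` is `π`-clustering: its BWT is `π(a₁)^{k₁} ⋯ π(a_k)^{k_k}` where `a₁ < … < a_k`
enumerates the alphabet and `k_i` is the number of occurrences of `π(a_i)` in `w`. -/
def Clustering {A : Type*} [LinearOrder A] [Fintype A] (π : Equiv.Perm A) (w : List A) : Prop :=
  bwt w =
    ((Finset.univ.sort (· ≤ ·)).map (fun a => List.replicate (w.count (π a)) (π a))).flatten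

namespace ClustAux

open List

variable {A : Type*}

lemma wordPow_succ (u : List A) (p : ℕ) : wordPow u (p + 1) = u ++ wordPow u p := rfl

lemma wordPow_nil (p : ℕ) : wordPow ([] : List A) p = [] := by
  induction p with
  | zero => rfl
  | succ n ih => simp [wordPow_succ, ih]

lemma wordPow_length (u : List A) (p : ℕ) : (wordPow u p).length = p * u.length := by
  induction p with
  | zero => simp [wordPow]
  | succ n ih => simp [wordPow_succ, ih]; ring

lemma wordPow_ne_nil {u : List A} (hu : u ≠ []) {p : ℕ} (hp : 1 ≤ p) :
    wordPow u p ≠ [] := by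
  have : (wordPow u p).length ≠ 0 := by
    rw [wordPow_length]
    have := List.length_pos_iff.2 hu
    positivity
  exact fun h => this (by simp [h])

lemma wordPow_count [DecidableEq A] (u : List A) (p : ℕ) (a : A) :
    (wordPow u p).count a = p * u.count a := by
  induction p with
  | zero => simp [wordPow]
  | succ n ih => simp [wordPow_succ, count_append, ih]; ring

lemma getLast?_wordPow {u : List A} (hu : u ≠ []) {p : ℕ} (hp : 1 ≤ p) :
    (wordPow u p).getLast? = u.getLast? := by
  induction p with
  | zero => omega
  | succ n ih =>
    rcases Nat.eq_zero_or_pos n with rfl | hn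
    · simp [wordPow_succ, wordPow]
    · have h1 : wordPow u n ≠ [] := wordPow_ne_nil hu hn
      obtain ⟨a, ha⟩ := Option.isSome_iff_exists.1 (List.getLast?_isSome.2 h1)
      rw [wordPow_succ, List.getLast?_append, ha, Option.some_or, ← ha, ih hn]

/-! ### expand -/

def expand (p : ℕ) (l : List A) : List A := (l.map (List.replicate p)).flatten

@[simp] lemma expand_nil (p : ℕ) : expand p ([] : List A) = [] := rfl

lemma expand_cons (p : ℕ) (a : A) (l : List A) :
    expand p (a :: l) = List.replicate p a ++ expand p l := rfl

lemma expand_append (p : ℕ) (l₁ l₂ : List A) :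
    expand p (l₁ ++ l₂) = expand p l₁ ++ expand p l₂ := by
  simp [expand]

lemma expand_replicate (p k : ℕ) (a : A) :
    expand p (List.replicate k a) = List.replicate (p * k) a := by
  induction k with
  | zero => simp
  | succ n ih =>
    rw [List.replicate_succ, expand_cons, ih, Nat.mul_succ, Nat.add_comm,
      List.replicate_add]

lemma expand_flatten (p : ℕ) (L : List (List A)) :
    expand p L.flatten = (L.map (expand p)).flatten := by
  induction L with
  | nil => simp
  | cons l L ih => simp [expand_append, ih]

lemma expand_ne_nil {p : ℕ} (hp : 1 ≤ p) (a : A) (l : List A) :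
    expand p (a :: l) ≠ [] := by
  rw [expand_cons]
  intro h
  rcases List.append_eq_nil_iff.1 h with ⟨h1, -⟩
  have := congrArg List.length h1
  simp at this
  omega

lemma expand_inj {p : ℕ} (hp : 1 ≤ p) :
    ∀ {l₁ l₂ : List A}, expand p l₁ = expand p l₂ → l₁ = l₂ := by
  intro l₁
  induction l₁ with
  | nil =>
    intro l₂ h
    cases l₂ with
    | nil => rfl
    | cons b l₂ => exact absurd h.symm (expand_ne_nil hp b l₂)
  | cons a l ih =>
    intro l₂ h
    cases l₂ with
    | nil => exact absurd h (expand_ne_nil hp a l)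
    | cons b l₂ =>
      rw [expand_cons, expand_cons] at h
      obtain ⟨h1, h2⟩ := List.append_inj h (by simp)
      have hab : a = b := by
        have : a ∈ List.replicate p b := h1 ▸ List.mem_replicate.2 ⟨by omega, rfl⟩
        exact (List.mem_replicate.1 this).2
      rw [hab, ih h2]

/-! ### lex monotonicity -/

lemma lex_append {r : A → A → Prop} {v w : List A} (h : List.Lex r v w)
    (hl : v.length = w.length) (x y : List A) : List.Lex r (v ++ x) (w ++ y) := by
  induction h generalizing x y with
  | nil => simp at hl
  | rel h => exact List.Lex.rel h
  | cons h ih => exact List.Lex.cons (ih (by simpa using hl) x y)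

variable [LinearOrder A]

lemma lt_append {v w x y : List A} (h : v < w) (hl : v.length = w.length) :
    v ++ x < w ++ y :=
  lex_append (show List.Lex (· < ·) v w from h) hl x y

lemma wordPow_le_wordPow {v w : List A} (hl : v.length = w.length) (h : v ≤ w) (p : ℕ) :
    wordPow v p ≤ wordPow w p := by
  rcases eq_or_lt_of_le h with rfl | hlt
  · exact le_rfl
  · cases p with
    | zero => exact le_rfl
    | succ n => exact le_of_lt (lt_append hlt hl)

/-! ### rotations of powers -/

lemma wordPow_comm (u : List A) (p : ℕ) : u ++ wordPow u p = wordPow u p ++ u := by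
  induction p with
  | zero => simp [wordPow]
  | succ n ih => rw [wordPow_succ, List.append_assoc, ih, ← List.append_assoc]

lemma sandwich (u tk dr : List A) (hu : u = tk ++ dr) (p : ℕ) :
    dr ++ wordPow u p ++ tk = wordPow (dr ++ tk) (p + 1) := by
  induction p with
  | zero => simp [wordPow_succ, wordPow]
  | succ n ih =>
    rw [wordPow_succ (dr ++ tk), ← ih, wordPow_succ, hu]
    simp [List.append_assoc]

lemma rotate_wordPow_small (u : List A) {r : ℕ} (hr : r ≤ u.length) {p : ℕ} (hp : 1 ≤ p) :
    (wordPow u p).rotate r = wordPow (u.rotate r) p := by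
  obtain ⟨q, rfl⟩ := Nat.exists_eq_add_of_le hp
  rw [Nat.add_comm 1 q]
  rw [List.rotate_eq_drop_append_take hr,
    List.rotate_eq_drop_append_take (by rw [wordPow_length]; calc
      r ≤ u.length := hr
      _ ≤ (q + 1) * u.length := Nat.le_mul_of_pos_left _ (by omega)),
    wordPow_succ, List.drop_append, List.take_append,
    Nat.sub_eq_zero_of_le hr, List.drop_zero, List.take_zero, List.append_nil,
    ← sandwich u (List.take r u) (List.drop r u) (List.take_append_drop r u).symm q,
    List.append_assoc]

lemma rotate_wordPow_len (u : List A) (p : ℕ) :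
    (wordPow u p).rotate u.length = wordPow u p := by
  cases p with
  | zero =>
    have : wordPow u 0 = ([] : List A) := rfl
    rw [this, List.rotate_nil]
  | succ n =>
    rw [wordPow_succ, List.rotate_eq_drop_append_take (by simp), List.drop_left,
      List.take_left]
    exact (wordPow_comm u n).symm

lemma rotate_wordPow_mul (u : List A) (p q : ℕ) :
    (wordPow u p).rotate (q * u.length) = wordPow u p := by
  induction q with
  | zero => simp
  | succ m ih =>
    rw [Nat.succ_mul, ← List.rotate_rotate, ih, rotate_wordPow_len]

lemma rotate_wordPow (u : List A) (hu : u ≠ []) {p : ℕ} (hp : 1 ≤ p) (i : ℕ) :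
    (wordPow u p).rotate i = wordPow (u.rotate (i % u.length)) p := by
  have hn : 0 < u.length := List.length_pos_iff.2 hu
  conv_lhs => rw [show i = (i / u.length) * u.length + i % u.length by
    rw [Nat.mul_comm]; exact (Nat.div_add_mod i u.length).symm]
  rw [← List.rotate_rotate, rotate_wordPow_mul,
    rotate_wordPow_small u (le_of_lt (Nat.mod_lt i hn)) hp]


/-! ### permutation of rotations -/

lemma flatten_replicate_succ_perm {B : Type*} (g : B → List A → Prop) : True := trivial

lemma F_succ_perm (g : ℕ → List A) (p : ℕ) (l : List ℕ) :
    ((l.map (fun j => List.replicate (p + 1) (g j))).flatten).Perm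
      (l.map g ++ (l.map (fun j => List.replicate p (g j))).flatten) := by
  induction l with
  | nil => simp
  | cons a l ih =>
    simp only [List.map_cons, List.flatten_cons, List.replicate_succ, List.cons_append]
    refine List.Perm.cons _ ?_
    calc List.replicate p (g a) ++ (l.map (fun j => List.replicate (p + 1) (g j))).flatten
        ~ List.replicate p (g a) ++ (l.map g ++ (l.map (fun j => List.replicate p (g j))).flatten) :=
          List.Perm.append_left _ ih
      _ ~ (l.map g ++ List.replicate p (g a)) ++ (l.map (fun j => List.replicate p (g j))).flatten := by
          rw [← List.append_assoc]
          exact List.Perm.append_right _ List.perm_append_comm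
      _ = l.map g ++ (List.replicate p (g a) ++ (l.map (fun j => List.replicate p (g j))).flatten) := by
          rw [List.append_assoc]

lemma range_mod_perm (g : ℕ → List A) (n : ℕ) (hn : 0 < n) (p : ℕ) :
    ((List.range (p * n)).map (fun i => g (i % n))).Perm
      (((List.range n).map (fun j => List.replicate p (g j))).flatten) := by
  induction p with
  | zero => simp
  | succ q ih =>
    have hr : List.range ((q + 1) * n) = List.range (q * n) ++
        (List.range n).map (fun x => q * n + x) := by
      rw [Nat.succ_mul, List.range_add]
    rw [hr, List.map_append, List.map_map]
    have h2 : ((List.range n).map ((fun i => g (i % n)) ∘ fun x => q * n + x)) =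
        (List.range n).map g := by
      apply List.map_congr_left
      intro a ha
      have ha' : a < n := List.mem_range.1 ha
      have : (q * n + a) % n = a := by
        rw [Nat.add_comm, Nat.add_mul_mod_self_right, Nat.mod_eq_of_lt ha']
      simp [Function.comp, this]
    rw [h2]
    calc (List.range (q * n)).map (fun i => g (i % n)) ++ (List.range n).map g
        ~ ((List.range n).map (fun j => List.replicate q (g j))).flatten ++ (List.range n).map g :=
          List.Perm.append_right _ ih
      _ ~ (List.range n).map g ++ ((List.range n).map (fun j => List.replicate q (g j))).flatten :=
          List.perm_append_comm
      _ ~ ((List.range n).map (fun j => List.replicate (q + 1) (g j))).flatten :=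
          (F_succ_perm g q (List.range n)).symm

/-! ### filterMap computations -/

lemma filterMap_replicate_some {B : Type*} {f : A → Option B} {x : A} {a : B}
    (h : f x = some a) (p : ℕ) :
    (List.replicate p x).filterMap f = List.replicate p a := by
  induction p with
  | zero => simp
  | succ n ih => rw [List.replicate_succ, List.replicate_succ, List.filterMap_cons, h, ih]

lemma filterMap_flatten_expand {p : ℕ} (hp : 1 ≤ p) :
    ∀ (S : List (List A)), (∀ r ∈ S, r ≠ []) →
      ((S.map (fun r => List.replicate p (wordPow r p))).flatten).filterMap List.getLast? =
        expand p (S.filterMap List.getLast?) := by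
  intro S
  induction S with
  | nil => intro _; simp
  | cons r S ih =>
    intro hmem
    have hr : r ≠ [] := hmem r (by simp)
    obtain ⟨a, ha⟩ := Option.isSome_iff_exists.1 (List.getLast?_isSome.2 hr)
    have hwa : (wordPow r p).getLast? = some a := by rw [getLast?_wordPow hr hp, ha]
    rw [List.map_cons, List.flatten_cons, List.filterMap_append,
      filterMap_replicate_some hwa, List.filterMap_cons, ha,
      ih (fun x hx => hmem x (by simp [hx])), expand_cons]


/-! ### the key BWT lemma -/

lemma bwt_wordPow (u : List A) {p : ℕ} (hp : 1 ≤ p) :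
    bwt (wordPow u p) = expand p (bwt u) := by
  rcases eq_or_ne u [] with rfl | hu
  · rw [wordPow_nil]
    simp [bwt]
  · have hn : 0 < u.length := List.length_pos_iff.2 hu
    simp only [bwt, wordPow_length]
    set S : List (List A) :=
      Multiset.sort
        (((List.range u.length).map (fun i => u.rotate i) : List (List A)) :
          Multiset (List A)) with hSdef
    have hScoe : (S : Multiset (List A)) =
        (((List.range u.length).map (fun i => u.rotate i) : List (List A)) :
          Multiset (List A)) := Multiset.sort_eq _ _
    have hSperm : S.Perm ((List.range u.length).map (fun i => u.rotate i)) :=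
      Multiset.coe_eq_coe.1 hScoe
    have hSsorted : S.Pairwise (· ≤ ·) := Multiset.pairwise_sort _ _
    have hSmem : ∀ r ∈ S, ∃ i, r = u.rotate i := by
      intro r hr
      have h := hSperm.mem_iff.1 hr
      rw [List.mem_map] at h
      obtain ⟨i, -, h⟩ := h
      exact ⟨i, h.symm⟩
    have hSlen : ∀ r ∈ S, r.length = u.length := by
      intro r hr; obtain ⟨i, rfl⟩ := hSmem r hr; simp
    have hSne : ∀ r ∈ S, r ≠ [] := by
      intro r hr h
      have h2 := hSlen r hr
      rw [h] at h2
      simp at h2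
      omega
    have key : Multiset.sort
        (((List.range (p * u.length)).map (fun i => (wordPow u p).rotate i) :
          List (List A)) : Multiset (List A)) =
        (S.map (fun r => List.replicate p (wordPow r p))).flatten := by
      refine (fun hp' hs => List.Perm.eq_of_pairwise' (Multiset.pairwise_sort _ _) hs hp') ?_ ?_
      · -- permutation
        have h1 : (Multiset.sort
            (((List.range (p * u.length)).map (fun i => (wordPow u p).rotate i) :
              List (List A)) : Multiset (List A))).Perm
            ((List.range (p * u.length)).map (fun i => (wordPow u p).rotate i)) :=
          Multiset.coe_eq_coe.1 (Multiset.sort_eq _ _)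
        have h2 : (List.range (p * u.length)).map (fun i => (wordPow u p).rotate i) =
            (List.range (p * u.length)).map
              (fun i => wordPow (u.rotate (i % u.length)) p) := by
          apply List.map_congr_left
          intro i _
          exact rotate_wordPow u hu hp i
        have h3 := range_mod_perm (fun j => wordPow (u.rotate j) p) u.length hn p
        have h4 : ((S.map (fun r => List.replicate p (wordPow r p))).flatten).Perm
            (((List.range u.length).map
              (fun j => List.replicate p (wordPow (u.rotate j) p))).flatten) := by
          refine List.Perm.flatten ?_
          have := hSperm.map (fun r => List.replicate p (wordPow r p))
          rwa [List.map_map] at this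
        calc Multiset.sort
              (((List.range (p * u.length)).map (fun i => (wordPow u p).rotate i) :
                List (List A)) : Multiset (List A))
            ~ (List.range (p * u.length)).map (fun i => (wordPow u p).rotate i) := h1
          _ = (List.range (p * u.length)).map
              (fun i => wordPow (u.rotate (i % u.length)) p) := h2
          _ ~ ((List.range u.length).map
              (fun j => List.replicate p (wordPow (u.rotate j) p))).flatten := h3
          _ ~ (S.map (fun r => List.replicate p (wordPow r p))).flatten := h4.symm
      · -- sortedness
        rw [List.pairwise_flatten]
        constructor
        · intro l hl
          rw [List.mem_map] at hl
          obtain ⟨r, -, rfl⟩ := hl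
          exact List.pairwise_replicate.2 (Or.inr le_rfl)
        · rw [List.pairwise_map]
          refine hSsorted.imp_of_mem ?_
          intro a b ha hb hab x hx y hy
          rw [List.eq_of_mem_replicate hx, List.eq_of_mem_replicate hy]
          exact wordPow_le_wordPow ((hSlen a ha).trans (hSlen b hb).symm) hab p
    rw [key, filterMap_flatten_expand hp S hSne]

end ClustAux

theorem clustering_pow_iff {A : Type*} [LinearOrder A] [Fintype A] (u : List A)
    (hu : Primitive u) (p : ℕ) (hp : 1 ≤ p) (π : Equiv.Perm A) :
    Clustering π (wordPow u p) ↔ Clustering π u := by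
  have hc : ∀ a : A, (wordPow u p).count a = p * u.count a := ClustAux.wordPow_count u p
  have htar : ((Finset.univ.sort (· ≤ ·)).map
        (fun a => List.replicate ((wordPow u p).count (π a)) (π a))).flatten
      = ClustAux.expand p (((Finset.univ.sort (· ≤ ·)).map
        (fun a => List.replicate (u.count (π a)) (π a))).flatten) := by
    rw [ClustAux.expand_flatten, List.map_map]
    congr 1
    apply List.map_congr_left
    intro a _
    simp only [Function.comp, ClustAux.expand_replicate, hc]
  unfold Clustering
  rw [ClustAux.bwt_wordPow u hp, htar]
  exact ⟨fun h => ClustAux.expand_inj hp h, fun h => by rw [h]⟩
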